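/- Let α ∈ (0, 1/2), let X, Y be i.i.d. random variables on [0,1] with density h(t) = α t^{α-1}, and let F_W be the CDF of W = |X - Y|. Then for all t ∈ (0, 1/2], F_W(t) ≥ t^{2α}. -/

import Mathlib

open MeasureTheory intervalIntegral

/-- Let `α ∈ (0, 1/2)` and let `W = |X - Y|` for `X, Y` i.i.d. on `[0,1]`
with density `h t = α t^(α-1)`, so that the CDF of `W` is
`F_W t = 2 ∫_0^1 h x (H (x+t) - H x) dx` with `H s = (min s 1)^α`.
Then `F_W t ≥ t^(2α)` for all `t ∈ (0, 1/2]`. -/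
theorem cdf_lower_bound (α : ℝ) (hα : α ∈ Set.Ioo (0 : ℝ) (1 / 2)) :
    ∀ t ∈ Set.Ioc (0 : ℝ) (1 / 2),
      t ^ (2 * α) ≤
        2 * ∫ x in (0 : ℝ)..1,
          (α * x ^ (α - 1)) * ((min (x + t) 1) ^ α - x ^ α) := by
  rintro t ⟨ht0, ht1⟩
  obtain ⟨hα0, hα2⟩ := hα
  have ht1' : t ≤ 1 := by linarith
  set f : ℝ → ℝ := fun x => (α * x ^ (α - 1)) * ((min (x + t) 1) ^ α - x ^ α) with hf
  -- integrability of f on [0,1]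
  have hbase : IntervalIntegrable (fun x : ℝ => α * x ^ (α - 1)) volume 0 1 :=
    (intervalIntegral.intervalIntegrable_rpow' (by linarith)).const_mul α
  have hcont : ContinuousOn (fun x : ℝ => (min (x + t) 1) ^ α - x ^ α) (Set.uIcc 0 1) := by
    apply ContinuousOn.sub
    · exact (((continuous_id.add continuous_const).min continuous_const).continuousOn).rpow_const
        (fun x _ => Or.inr hα0.le)
    · exact continuousOn_id.rpow_const (fun x _ => Or.inr hα0.le)
  have hfint : IntervalIntegrable f volume 0 1 := hbase.mul_continuousOn hcont
  have hsub1 : Set.uIcc (0:ℝ) t ⊆ Set.uIcc 0 1 :=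
    Set.uIcc_subset_uIcc (by simp [Set.mem_uIcc]) (by simp [Set.mem_uIcc, ht0.le, ht1'])
  have hsub2 : Set.uIcc t 1 ⊆ Set.uIcc (0:ℝ) 1 :=
    Set.uIcc_subset_uIcc (by simp [Set.mem_uIcc, ht0.le, ht1']) (by simp [Set.mem_uIcc])
  have hfint1 : IntervalIntegrable f volume 0 t := hfint.mono_set hsub1
  have hfint2 : IntervalIntegrable f volume t 1 := hfint.mono_set hsub2
  -- the comparison function g on [0,t]
  set g : ℝ → ℝ := fun x => (α * t ^ α) * x ^ (α - 1) - α * x ^ (2 * α - 1) with hg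
  have hgint : IntervalIntegrable g volume 0 t := by
    apply IntervalIntegrable.sub
    · exact (intervalIntegral.intervalIntegrable_rpow' (by linarith)).const_mul _
    · exact (intervalIntegral.intervalIntegrable_rpow' (by linarith)).const_mul _
  -- pointwise: g ≤ f on [0,t]
  have hmono : ∀ x ∈ Set.Icc (0:ℝ) t, g x ≤ f x := by
    intro x hx
    obtain ⟨hx0, hxt⟩ := hx
    have hge : t ^ α ≤ (min (x + t) 1) ^ α := by
      apply Real.rpow_le_rpow ht0.le _ hα0.le
      exact le_min (by linarith) ht1'
    have hfac : 0 ≤ α * x ^ (α - 1) := mul_nonneg hα0.le (Real.rpow_nonneg hx0 _)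
    have key : (α * x ^ (α - 1)) * (t ^ α - x ^ α) ≤ f x := by
      simp only [hf]
      apply mul_le_mul_of_nonneg_left _ hfac
      linarith
    refine le_trans (le_of_eq ?_) key
    simp only [hg]
    rcases eq_or_lt_of_le hx0 with h0 | h0
    · rw [← h0]
      rw [Real.zero_rpow (by linarith : α - 1 ≠ 0), Real.zero_rpow (by linarith : 2 * α - 1 ≠ 0)]
      ring
    · have : x ^ (2 * α - 1) = x ^ (α - 1) * x ^ α := by
        rw [← Real.rpow_add h0]; ring_nf
      rw [this]; ring
  have hcmp : ∫ x in (0 : ℝ)..t, g x ≤ ∫ x in (0 : ℝ)..t, f x :=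
    intervalIntegral.integral_mono_on ht0.le hgint hfint1 hmono
  -- compute ∫ g
  have hcomp : ∫ x in (0 : ℝ)..t, g x = t ^ (2 * α) / 2 := by
    rw [intervalIntegral.integral_sub
      ((intervalIntegral.intervalIntegrable_rpow' (by linarith)).const_mul _)
      ((intervalIntegral.intervalIntegrable_rpow' (by linarith)).const_mul _),
      intervalIntegral.integral_const_mul, intervalIntegral.integral_const_mul,
      integral_rpow (Or.inl (by linarith)), integral_rpow (Or.inl (by linarith))]
    have h1 : α - 1 + 1 = α := by ring
    have h2 : 2 * α - 1 + 1 = 2 * α := by ring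
    rw [h1, h2, Real.zero_rpow hα0.ne', Real.zero_rpow (by positivity : (2*α) ≠ 0)]
    have ht2 : t ^ α * t ^ α = t ^ (2 * α) := by
      rw [← Real.rpow_add ht0]; ring_nf
    field_simp
    have ht3 : t ^ (α * 2) = t ^ (2 * α) := by rw [mul_comm]
    linear_combination 2 * ht2 - 2 * ht3
  -- ∫ f on [t,1] nonneg
  have hnn : 0 ≤ ∫ x in t..1, f x := by
    apply intervalIntegral.integral_nonneg ht1'
    intro x hx
    obtain ⟨hxt, hx1⟩ := hx
    have hx0 : (0:ℝ) ≤ x := le_trans ht0.le hxt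
    have : x ^ α ≤ (min (x + t) 1) ^ α := by
      apply Real.rpow_le_rpow hx0 _ hα0.le
      exact le_min (by linarith) hx1
    have hfac : 0 ≤ α * x ^ (α - 1) := mul_nonneg hα0.le (Real.rpow_nonneg hx0 _)
    exact mul_nonneg hfac (by linarith)
  -- combine
  have hsplit : (∫ x in (0:ℝ)..t, f x) + ∫ x in t..1, f x = ∫ x in (0:ℝ)..1, f x :=
    intervalIntegral.integral_add_adjacent_intervals hfint1 hfint2
  have : t ^ (2 * α) / 2 ≤ ∫ x in (0:ℝ)..1, f x := by
    rw [← hsplit, ← hcomp]; linarith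
  simpa [hf] using by linarith
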